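/- (Theorem 4: almost sure convergence of the posterior probability of H₀.) Let W_1, W_2, … be independent integrable real random variables with finite variances such that there exists ε > 0 with E[W_m] ≤ −ε for all m, and Σ_{m=1}^∞ Var(W_m)/m² < ∞. Let κ₀ ∈ (0,1) and for each M define the posterior probability κ_{0M} = [1 + ((1−κ₀)/κ₀)·exp(Σ_{m=1}^{M} W_m)]^{−1}. Then κ_{0M} → 1 almost surely as M → ∞. -/

import Mathlib

open MeasureTheory ProbabilityTheory Filter

open scoped ENNReal NNReal

section AuxLemmas

/-- Kronecker's lemma, specialized. -/
lemma kronecker_aux {a : ℕ → ℝ} {L : ℝ}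
    (h : Tendsto (fun n => ∑ m ∈ Finset.range n, ((m : ℝ) + 1)⁻¹ * a m) atTop (nhds L)) :
    Tendsto (fun n : ℕ => (n : ℝ)⁻¹ * ∑ m ∈ Finset.range n, a m) atTop (nhds 0) := by
  set B : ℕ → ℝ := fun n => ∑ m ∈ Finset.range n, ((m : ℝ) + 1)⁻¹ * a m with hB
  have key : ∀ n, ∑ m ∈ Finset.range n, a m = n * B n - ∑ m ∈ Finset.range n, B m := by
    intro n
    induction n with
    | zero => simp [hB]
    | succ n ih =>
      rw [Finset.sum_range_succ, ih, Finset.sum_range_succ (f := B)]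
      have hBn : B (n + 1) = B n + ((n : ℝ) + 1)⁻¹ * a n := by
        simp [hB, Finset.sum_range_succ]
      rw [hBn]
      have hne : ((n : ℝ) + 1) ≠ 0 := by positivity
      push_cast
      field_simp
      ring
  have hc : Tendsto (fun n : ℕ => (n : ℝ)⁻¹ • ∑ m ∈ Finset.range n, B m) atTop (nhds L) :=
    h.cesaro
  have hmain : Tendsto (fun n : ℕ => B n - (n : ℝ)⁻¹ * ∑ m ∈ Finset.range n, B m)
      atTop (nhds 0) := by
    have := h.sub hc
    simpa using this
  apply hmain.congr'
  filter_upwards [eventually_ge_atTop 1] with n hn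
  have hne : (n : ℝ) ≠ 0 := by positivity
  rw [key n, mul_sub, ← mul_assoc, inv_mul_cancel₀ hne, one_mul]

/-- a.e.-equal families inherit independence. -/
lemma iIndepFun_congr_ae {Ω : Type*} [MeasurableSpace Ω] {μ : Measure Ω}
    {f g : ℕ → Ω → ℝ} (hfg : ∀ i, f i =ᵐ[μ] g i)
    (h : iIndepFun f μ) :
    iIndepFun g μ := by
  rw [iIndepFun_iff_measure_inter_preimage_eq_mul] at h ⊢
  intro S sets hsets
  have hae : ∀ i, ∀ s : Set ℝ, (f i ⁻¹' s : Set Ω) =ᵐ[μ] (g i ⁻¹' s) := by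
    intro i s
    filter_upwards [hfg i] with ω hω
    show (f i ω ∈ s) = (g i ω ∈ s)
    rw [hω]
  have h1 : (⋂ i ∈ S, g i ⁻¹' sets i : Set Ω) =ᵐ[μ] (⋂ i ∈ S, f i ⁻¹' sets i) := by
    have : ∀ᵐ ω ∂μ, ∀ i ∈ (S : Set ℕ), f i ω = g i ω :=
      (ae_ball_iff S.countable_toSet).2 fun i _ => hfg i
    filter_upwards [this] with ω hω
    show (ω ∈ ⋂ i ∈ S, g i ⁻¹' sets i) = (ω ∈ ⋂ i ∈ S, f i ⁻¹' sets i)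
    simp only [Set.mem_iInter, Set.mem_preimage, eq_iff_iff]
    exact ⟨fun hh i hi => by rw [hω i (Finset.mem_coe.2 hi)]; exact hh i hi,
           fun hh i hi => by rw [← hω i hi]; exact hh i hi⟩
  rw [measure_congr h1, h S hsets]
  exact Finset.prod_congr rfl fun i hi => measure_congr (hae i (sets i))


lemma eLpNorm_one_le_sqrt_of_variance_le {Ω : Type*} [MeasurableSpace Ω] {μ : Measure Ω}
    [IsProbabilityMeasure μ] {f : Ω → ℝ} (hf : MemLp f 2 μ)
    (hmean : ∫ ω, f ω ∂μ = 0) {V : ℝ} (h : variance f μ ≤ V) :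
    eLpNorm f 1 μ ≤ ENNReal.ofReal (Real.sqrt V) := by
  have hV0 : 0 ≤ V := le_trans (variance_nonneg f μ) h
  have h1 : eLpNorm f 1 μ ≤ eLpNorm f 2 μ :=
    eLpNorm_le_eLpNorm_of_exponent_le one_le_two hf.1
  have h2 : eLpNorm f 2 μ = (evariance f μ) ^ (1 / 2 : ℝ) := by
    have hev : evariance f μ = ∫⁻ ω, ‖f ω‖ₑ ^ (2 : ℝ) ∂μ := by
      rw [evariance, hmean]
      congr 1
      ext ω
      rw [sub_zero, ← ENNReal.rpow_natCast]
      norm_num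
    rw [eLpNorm_eq_lintegral_rpow_enorm_toReal two_ne_zero ENNReal.ofNat_ne_top]
    norm_num [hev]
  have h3 : evariance f μ ≤ ENNReal.ofReal V := by
    rw [← hf.ofReal_variance_eq]
    exact ENNReal.ofReal_le_ofReal h
  calc eLpNorm f 1 μ ≤ eLpNorm f 2 μ := h1
    _ = (evariance f μ) ^ (1 / 2 : ℝ) := h2
    _ ≤ (ENNReal.ofReal V) ^ (1 / 2 : ℝ) := ENNReal.rpow_le_rpow h3 (by norm_num)
    _ = ENNReal.ofReal (V ^ (1 / 2 : ℝ)) := ENNReal.ofReal_rpow_of_nonneg hV0 (by norm_num)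
    _ = ENNReal.ofReal (Real.sqrt V) := by rw [Real.sqrt_eq_rpow]

lemma ae_partial_sums_converge {Ω : Type*} [MeasurableSpace Ω] (μ : Measure Ω)
    [IsProbabilityMeasure μ] (Y : ℕ → Ω → ℝ) (hmeas : ∀ m, StronglyMeasurable (Y m))
    (hindep : iIndepFun Y μ)
    (hL2 : ∀ m, MemLp (Y m) 2 μ)
    (hmean : ∀ m, ∫ ω, Y m ω ∂μ = 0)
    (hvar : Summable fun m : ℕ => variance (Y m) μ / ((m : ℝ) + 1) ^ 2) :
    ∀ᵐ ω ∂μ, ∃ c, Tendsto (fun n => ∑ m ∈ Finset.range n, ((m : ℝ) + 1)⁻¹ * Y m ω)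
      atTop (nhds c) := by
  classical
  set v : ℕ → ℝ := fun m => variance (Y m) μ / ((m : ℝ) + 1) ^ 2 with hv
  have hv0 : ∀ m, 0 ≤ v m := fun m => div_nonneg (variance_nonneg _ _) (by positivity)
  set V : ℝ := ∑' m, v m with hVdef
  set g : ℕ → Ω → ℝ := fun m => fun ω => ((m : ℝ) + 1)⁻¹ * Y m ω with hg
  have hgmeas : ∀ m, StronglyMeasurable (g m) := fun m =>
    stronglyMeasurable_const.mul (hmeas m)
  have hgL2 : ∀ m, MemLp (g m) 2 μ := fun m => (hL2 m).const_mul _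
  have hgint : ∀ m, Integrable (g m) μ := fun m => (hgL2 m).integrable one_le_two
  have hgmean : ∀ m, ∫ ω, g m ω ∂μ = 0 := by
    intro m
    show ∫ ω, ((m : ℝ) + 1)⁻¹ * Y m ω ∂μ = 0
    rw [integral_const_mul, hmean m, mul_zero]
  have hgvar : ∀ m, variance (g m) μ = v m := by
    intro m
    show variance (fun ω => ((m : ℝ) + 1)⁻¹ * Y m ω) μ = v m
    rw [variance_const_mul]
    show ((m : ℝ) + 1)⁻¹ ^ 2 * variance (Y m) μ = variance (Y m) μ / ((m : ℝ) + 1) ^ 2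
    rw [div_eq_mul_inv, mul_comm, ← inv_pow]
  set T : ℕ → Ω → ℝ := fun n => ∑ m ∈ Finset.range (n + 1), g m with hT
  have hTapply : ∀ n ω, T n ω = ∑ m ∈ Finset.range (n + 1), g m ω := by
    intro n ω
    rw [hT]
    exact Finset.sum_apply ω _ _
  have hTfun : ∀ n, T n = fun ω => ∑ m ∈ Finset.range (n + 1), g m ω :=
    fun n => funext (hTapply n)
  set ℱ := Filtration.natural Y hmeas with hℱ
  have hTint : ∀ n, Integrable (T n) μ := fun n =>
    integrable_finset_sum' _ (fun m _ => hgint m)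
  have hTadapted : ∀ n, StronglyMeasurable[ℱ n] (T n) := by
    intro n
    rw [hTfun]
    refine Finset.stronglyMeasurable_fun_sum _ (fun m hm => ?_)
    have hmn : m ≤ n := Nat.lt_succ_iff.mp (Finset.mem_range.mp hm)
    exact stronglyMeasurable_const.mul
      ((Filtration.stronglyAdapted_natural hmeas m).mono (ℱ.mono hmn))
  have hmart : Martingale T ℱ μ := by
    constructor
    · exact fun n => hTadapted n
    · intro i j hij
      have hsplit : T j = T i + ∑ m ∈ Finset.Ico (i + 1) (j + 1), g m := by
        rw [hT]
        exact (Finset.sum_range_add_sum_Ico _ (Nat.succ_le_succ hij)).symm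
      have step3 : ∀ m ∈ Finset.Ico (i + 1) (j + 1), μ[g m|ℱ i] =ᵐ[μ] 0 := by
        intro m hm
        have him : i < m := Nat.lt_of_succ_le (Finset.mem_Ico.mp hm).1
        have hsmul : g m = ((m : ℝ) + 1)⁻¹ • Y m := by
          ext ω; simp [hg, smul_eq_mul]
        have hce : μ[Y m|ℱ i] =ᵐ[μ] fun _ => ∫ ω, Y m ω ∂μ :=
          hindep.condExp_natural_ae_eq_of_lt hmeas him
        calc μ[g m|ℱ i] =ᵐ[μ] ((m : ℝ) + 1)⁻¹ • μ[Y m|ℱ i] := by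
              rw [hsmul]; exact condExp_smul _ _ _
          _ =ᵐ[μ] 0 := by
              filter_upwards [hce] with ω hω
              simp only [Pi.smul_apply, hω, hmean m, smul_zero, Pi.zero_apply]
      have step4 : μ[∑ m ∈ Finset.Ico (i + 1) (j + 1), g m|ℱ i] =ᵐ[μ] 0 := by
        refine (condExp_finset_sum (fun m _ => hgint m) _).trans ?_
        have key : ∀ᵐ ω ∂μ, ∀ m ∈ (Finset.Ico (i + 1) (j + 1) : Set ℕ),
            (μ[g m|ℱ i]) ω = 0 :=
          (ae_ball_iff (Finset.Ico (i + 1) (j + 1)).countable_toSet).2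
            (fun m hm => step3 m (Finset.mem_coe.mp hm))
        filter_upwards [key] with ω hω
        rw [Finset.sum_apply]
        exact Finset.sum_eq_zero (fun m hm => hω m (Finset.mem_coe.mpr hm))
      have step1 : μ[T j|ℱ i] =ᵐ[μ] μ[T i|ℱ i] + μ[∑ m ∈ Finset.Ico (i + 1) (j + 1), g m|ℱ i] := by
        rw [hsplit]
        exact condExp_add (hTint i) (integrable_finset_sum' _ (fun m _ => hgint m)) _
      refine step1.trans ?_
      rw [condExp_of_stronglyMeasurable (ℱ.le i) (hTadapted i) (hTint i)]
      refine (Filter.EventuallyEq.rfl.add step4).trans ?_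
      exact Filter.EventuallyEq.of_eq (add_zero _)
  have hTvar : ∀ n, variance (T n) μ ≤ V := by
    intro n
    have hpair : Set.Pairwise ↑(Finset.range (n + 1))
        fun a b => IndepFun (g a) (g b) μ := by
      intro a _ b _ hab
      exact (hindep.indepFun hab).comp (measurable_const_mul _) (measurable_const_mul _)
    have hvs := IndepFun.variance_sum (μ := μ) (X := g) (s := Finset.range (n + 1))
      (fun m _ => hgL2 m) hpair
    rw [hT]
    rw [hvs]
    simp_rw [hgvar]
    exact Summable.sum_le_tsum _ (fun m _ => hv0 m) hvar
  have hTmean : ∀ n, ∫ ω, T n ω ∂μ = 0 := by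
    intro n
    simp_rw [hTapply]
    rw [integral_finset_sum _ (fun m _ => hgint m)]
    exact Finset.sum_eq_zero (fun m _ => hgmean m)
  have hbdd : ∀ n, eLpNorm (T n) 1 μ ≤ (Real.sqrt V).toNNReal := by
    intro n
    have hb := eLpNorm_one_le_sqrt_of_variance_le
      (memLp_finset_sum' _ (fun m _ => hgL2 m) : MemLp (T n) 2 μ)
      (hTmean n) (hTvar n)
    rwa [ENNReal.ofReal] at hb
  have hconv := hmart.submartingale.exists_ae_tendsto_of_bdd hbdd
  filter_upwards [hconv] with ω hc
  obtain ⟨c, hc⟩ := hc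
  refine ⟨c, ?_⟩
  rw [← tendsto_add_atTop_iff_nat 1]
  refine hc.congr (fun n => ?_)
  rw [hTapply]

end AuxLemmas

/-- **Theorem 4: almost sure convergence of the posterior probability of H₀.** Let
`W_1, W_2, …` be independent integrable real random variables with finite variances
(`MemLp (W m) 2`), such that `E[W_m] ≤ −ε` for all `m` for some `ε > 0`, and
`Σ_m Var(W_m)/m² < ∞`. Let the prior `κ₀ ∈ (0,1)` and define the posterior probability
after `M` studies `κ_{0M} = [1 + ((1−κ₀)/κ₀)·exp(Σ_{m=1}^{M} W_m)]⁻¹`. Then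
`κ_{0M} → 1` almost surely as `M → ∞`. -/
theorem posterior_probability_converges_to_one
    {Ω : Type*} [MeasurableSpace Ω] (μ : Measure Ω) [IsProbabilityMeasure μ]
    (W : ℕ → Ω → ℝ)
    (hindep : iIndepFun W μ)
    (hL2 : ∀ m, MemLp (W m) 2 μ)
    (ε : ℝ) (hε : 0 < ε)
    (hmean : ∀ m, ∫ ω, W m ω ∂μ ≤ -ε)
    (hvar : Summable fun m : ℕ => variance (W m) μ / ((m : ℝ) + 1) ^ 2)
    (κ₀ : ℝ) (hκ₀ : κ₀ ∈ Set.Ioo (0 : ℝ) 1) :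
    ∀ᵐ ω ∂μ, Tendsto
      (fun M => (1 + ((1 - κ₀) / κ₀) * Real.exp (∑ m ∈ Finset.range M, W m ω))⁻¹)
      atTop (nhds 1) := by
  classical
  set c : ℕ → ℝ := fun m => ∫ ω, W m ω ∂μ with hc
  set W' : ℕ → Ω → ℝ := fun m => (hL2 m).1.mk (W m) with hW'
  have hW'meas : ∀ m, StronglyMeasurable (W' m) := fun m => (hL2 m).1.stronglyMeasurable_mk
  have hWW' : ∀ m, W m =ᵐ[μ] W' m := fun m => (hL2 m).1.ae_eq_mk
  set Y : ℕ → Ω → ℝ := fun m => fun ω => W' m ω - c m with hY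
  have hYmeas : ∀ m, StronglyMeasurable (Y m) :=
    fun m => (hW'meas m).sub stronglyMeasurable_const
  have hW'indep : iIndepFun W' μ :=
    iIndepFun_congr_ae hWW' hindep
  have hYindep : iIndepFun Y μ :=
    hW'indep.comp (fun m => fun x => x - c m)
      (fun m => measurable_id.sub measurable_const)
  have hW'L2 : ∀ m, MemLp (W' m) 2 μ := fun m => (hL2 m).ae_eq (hWW' m)
  have hYL2 : ∀ m, MemLp (Y m) 2 μ := fun m => (hW'L2 m).sub (memLp_const (c m))
  have hW'int : ∀ m, ∫ ω, W' m ω ∂μ = c m :=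
    fun m => (integral_congr_ae (hWW' m)).symm
  have hYmean : ∀ m, ∫ ω, Y m ω ∂μ = 0 := by
    intro m
    rw [hY]
    simp only
    rw [integral_sub ((hW'L2 m).integrable one_le_two) (integrable_const _)]
    rw [hW'int m, integral_const]
    simp
  have hYvar : ∀ m, variance (Y m) μ = variance (W m) μ := by
    intro m
    rw [variance, variance]
    apply congrArg ENNReal.toReal
    rw [evariance, evariance, hYmean m]
    apply lintegral_congr_ae
    filter_upwards [hWW' m] with ω hω
    have h1 : Y m ω - 0 = W m ω - ∫ x, W m x ∂μ := by
      rw [hY]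
      simp only [sub_zero]
      rw [hω]
    rw [h1]
  have hvar' : Summable fun m : ℕ => variance (Y m) μ / ((m : ℝ) + 1) ^ 2 := by
    refine hvar.congr fun m => ?_
    rw [hYvar m]
  have hconv := ae_partial_sums_converge μ Y hYmeas hYindep hYL2 hYmean hvar'
  have hWae : ∀ᵐ ω ∂μ, ∀ m, W m ω = W' m ω := ae_all_iff.2 (fun m => hWW' m)
  filter_upwards [hconv, hWae] with ω hLc hWω
  obtain ⟨L, hL⟩ := hLc
  have hL' : Tendsto (fun n => ∑ m ∈ Finset.range n, ((m : ℝ) + 1)⁻¹ * (W m ω - c m))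
      atTop (nhds L) := by
    refine hL.congr fun n => ?_
    refine Finset.sum_congr rfl fun m _ => ?_
    rw [hY]
    simp only
    rw [hWω m]
  have hK := kronecker_aux hL'
  -- eventually the partial sums are ≤ -(ε/2) n
  have hSle : ∀ᶠ n : ℕ in atTop, (∑ m ∈ Finset.range n, W m ω) ≤ -(ε / 2) * n := by
    have h2 : ∀ᶠ n : ℕ in atTop,
        (n : ℝ)⁻¹ * ∑ m ∈ Finset.range n, (W m ω - c m) < ε / 2 :=
      hK.eventually_lt_const (by positivity)
    filter_upwards [h2, eventually_ge_atTop 1] with n h2n hn1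
    have hnpos : (0 : ℝ) < n := by exact_mod_cast hn1
    have hsum : ∑ m ∈ Finset.range n, (W m ω - c m) ≤ ε / 2 * n := by
      have h3 : (n : ℝ) * ((n : ℝ)⁻¹ * ∑ m ∈ Finset.range n, (W m ω - c m))
          ≤ (n : ℝ) * (ε / 2) := mul_le_mul_of_nonneg_left h2n.le hnpos.le
      rw [← mul_assoc, mul_inv_cancel₀ hnpos.ne', one_mul] at h3
      linarith
    have hcsum : ∑ m ∈ Finset.range n, c m ≤ -ε * n := by
      calc ∑ m ∈ Finset.range n, c m ≤ ∑ _m ∈ Finset.range n, (-ε) :=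
            Finset.sum_le_sum (fun m _ => hmean m)
        _ = -ε * n := by
            rw [Finset.sum_const, Finset.card_range, nsmul_eq_mul]
            ring
    have hWsum : ∑ m ∈ Finset.range n, W m ω
        = (∑ m ∈ Finset.range n, (W m ω - c m)) + ∑ m ∈ Finset.range n, c m := by
      rw [← Finset.sum_add_distrib]
      simp
    rw [hWsum]
    have : ε / 2 * n + -ε * n = -(ε / 2) * n := by ring
    linarith
  have hgbot : Tendsto (fun n : ℕ => -(ε / 2) * (n : ℝ)) atTop atBot := by
    have h4 : Tendsto (fun n : ℕ => (ε / 2) * (n : ℝ)) atTop atTop :=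
      (tendsto_natCast_atTop_atTop (R := ℝ)).const_mul_atTop (half_pos hε)
    have h5 : Tendsto (fun n : ℕ => -((ε / 2) * (n : ℝ))) atTop atBot :=
      tendsto_neg_atBot_iff.mpr h4
    exact h5.congr fun n => by ring
  have hbot : Tendsto (fun n : ℕ => ∑ m ∈ Finset.range n, W m ω) atTop atBot :=
    tendsto_atBot_mono' atTop hSle hgbot
  have hexp : Tendsto (fun n : ℕ => Real.exp (∑ m ∈ Finset.range n, W m ω))
      atTop (nhds 0) := Real.tendsto_exp_atBot.comp hbot
  have hfin : Tendsto
      (fun M : ℕ => 1 + ((1 - κ₀) / κ₀) * Real.exp (∑ m ∈ Finset.range M, W m ω))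
      atTop (nhds 1) := by
    have := tendsto_const_nhds (x := (1 : ℝ)) (f := atTop (α := ℕ)) |>.add
      ((tendsto_const_nhds (x := (1 - κ₀) / κ₀)).mul hexp)
    simpa using this
  have := hfin.inv₀ (by norm_num)
  simpa using this
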